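/- Let A ∈ Sⁿ be a symmetric matrix whose support graph G(A) is an n-cycle (n ≥ 5). Then A is completely positive semidefinite if and only if A is completely positive. -/

import Mathlib

open Matrix

def CompletelyPSD {n : ℕ} (A : Matrix (Fin n) (Fin n) ℝ) : Prop :=
  ∃ (d : ℕ) (X : Fin n → Matrix (Fin d) (Fin d) ℝ),
    1 ≤ d ∧ (∀ i, (X i).PosSemidef) ∧ ∀ i j, A i j = ((X i) * (X j)).trace

def CompletelyPositive {n : ℕ} (A : Matrix (Fin n) (Fin n) ℝ) : Prop :=
  ∃ (d : ℕ) (x : Fin n → Fin d → ℝ),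
    1 ≤ d ∧ (∀ i k, 0 ≤ x i k) ∧ ∀ i j, A i j = ∑ k, x i k * x j k

section Aux

variable {d : ℕ}

private lemma trace_mul_sum (M N : Matrix (Fin d) (Fin d) ℝ) :
    (M * N).trace = ∑ k, ∑ l, M k l * N l k := by
  simp [Matrix.trace, Matrix.diag, Matrix.mul_apply]

private lemma trace_tm_self (M : Matrix (Fin d) (Fin d) ℝ) :
    (Mᵀ * M).trace = ∑ k, ∑ l, (M l k)^2 := by
  simp [trace_mul_sum, Matrix.transpose_apply, sq, mul_comm]

private lemma trace_tm_nonneg (M : Matrix (Fin d) (Fin d) ℝ) : 0 ≤ (Mᵀ * M).trace := by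
  rw [trace_tm_self]; positivity

private lemma tm_eq_zero_of_trace (M : Matrix (Fin d) (Fin d) ℝ) (h : (Mᵀ * M).trace = 0) :
    M = 0 := by
  rw [trace_tm_self] at h
  ext l k
  have h1 : ∀ k ∈ Finset.univ, (0:ℝ) ≤ ∑ l, (M l k)^2 := fun _ _ => by positivity
  have h2 := (Finset.sum_eq_zero_iff_of_nonneg h1).mp h k (Finset.mem_univ k)
  have h3 : ∀ l ∈ Finset.univ, (0:ℝ) ≤ (M l k)^2 := fun _ _ => sq_nonneg _
  have := (Finset.sum_eq_zero_iff_of_nonneg h3).mp h2 l (Finset.mem_univ l)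
  simpa [pow_eq_zero_iff] using this

private lemma psd_factor {X : Matrix (Fin d) (Fin d) ℝ} (hX : X.PosSemidef) :
    ∃ B : Matrix (Fin d) (Fin d) ℝ, X = Bᵀ * B := by
  obtain ⟨B, hB⟩ : ∃ B : Matrix (Fin d) (Fin d) ℝ, X = Bᴴ * B := by
    open scoped MatrixOrder in
    exact CStarAlgebra.nonneg_iff_eq_star_mul_self.mp hX.nonneg
  exact ⟨B, by simpa [Matrix.conjTranspose_eq_transpose_of_trivial] using hB⟩

private lemma trace_psd_mul_nonneg {X Y : Matrix (Fin d) (Fin d) ℝ} (hX : X.PosSemidef)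
    (hY : Y.PosSemidef) : 0 ≤ (X * Y).trace := by
  obtain ⟨B, rfl⟩ := psd_factor hX
  obtain ⟨C, rfl⟩ := psd_factor hY
  have : (Bᵀ * B * (Cᵀ * C)).trace = ((B * Cᵀ)ᵀ * (B * Cᵀ)).trace := by
    rw [Matrix.transpose_mul, Matrix.transpose_transpose]
    calc (Bᵀ * B * (Cᵀ * C)).trace
        = (Bᵀ * (B * Cᵀ * C)).trace := by
          rw [show Bᵀ * B * (Cᵀ * C) = Bᵀ * (B * Cᵀ * C) by noncomm_ring]
      _ = ((B * Cᵀ * C) * Bᵀ).trace := Matrix.trace_mul_comm _ _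
      _ = ((B * Cᵀ) * (C * Bᵀ)).trace := by
          rw [show B * Cᵀ * C * Bᵀ = (B * Cᵀ) * (C * Bᵀ) by noncomm_ring]
      _ = ((C * Bᵀ) * (B * Cᵀ)).trace := Matrix.trace_mul_comm _ _
  rw [this]; exact trace_tm_nonneg _

private lemma mul_eq_zero_of_trace_eq_zero {X Y : Matrix (Fin d) (Fin d) ℝ} (hX : X.PosSemidef)
    (hY : Y.PosSemidef) (h : (X * Y).trace = 0) : X * Y = 0 := by
  obtain ⟨B, rfl⟩ := psd_factor hX
  obtain ⟨C, rfl⟩ := psd_factor hY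
  have e : (Bᵀ * B * (Cᵀ * C)).trace = ((B * Cᵀ)ᵀ * (B * Cᵀ)).trace := by
    rw [Matrix.transpose_mul, Matrix.transpose_transpose]
    calc (Bᵀ * B * (Cᵀ * C)).trace
        = (Bᵀ * (B * Cᵀ * C)).trace := by
          rw [show Bᵀ * B * (Cᵀ * C) = Bᵀ * (B * Cᵀ * C) by noncomm_ring]
      _ = ((B * Cᵀ * C) * Bᵀ).trace := Matrix.trace_mul_comm _ _
      _ = ((B * Cᵀ) * (C * Bᵀ)).trace := by
          rw [show B * Cᵀ * C * Bᵀ = (B * Cᵀ) * (C * Bᵀ) by noncomm_ring]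
      _ = ((C * Bᵀ) * (B * Cᵀ)).trace := Matrix.trace_mul_comm _ _
  rw [e] at h
  have hz := tm_eq_zero_of_trace _ h
  calc Bᵀ * B * (Cᵀ * C) = Bᵀ * (B * Cᵀ) * C := by noncomm_ring
  _ = 0 := by rw [hz]; simp

private lemma trace_mul_sq_le (M N : Matrix (Fin d) (Fin d) ℝ) :
    ((M * N).trace)^2 ≤ (Mᵀ * M).trace * (Nᵀ * N).trace := by
  have h1 : (M * N).trace = ∑ p : Fin d × Fin d, M p.1 p.2 * N p.2 p.1 := by
    rw [trace_mul_sum, ← Finset.sum_product']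
    rfl
  have h2 : (Mᵀ * M).trace = ∑ p : Fin d × Fin d, (M p.1 p.2)^2 := by
    rw [trace_tm_self, Finset.sum_comm, ← Finset.sum_product']
    rfl
  have h3 : (Nᵀ * N).trace = ∑ p : Fin d × Fin d, (N p.2 p.1)^2 := by
    rw [trace_tm_self, ← Finset.sum_product']
    rfl
  rw [h1, h2, h3]
  exact Finset.sum_mul_sq_le_sq_mul_sq _ _ _

private lemma spec_real {X : Matrix (Fin d) (Fin d) ℝ} (hX : X.IsHermitian) :
    X = (hX.eigenvectorUnitary : Matrix (Fin d) (Fin d) ℝ) * diagonal hX.eigenvalues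
      * star (hX.eigenvectorUnitary : Matrix (Fin d) (Fin d) ℝ) := by
  have := hX.spectral_theorem
  simpa using this

private lemma conjDiag_mul {E : Matrix (Fin d) (Fin d) ℝ}
    (hE : E ∈ Matrix.unitaryGroup (Fin d) ℝ) (f g : Fin d → ℝ) :
    (E * diagonal f * star E) * (E * diagonal g * star E)
      = E * diagonal (fun k => f k * g k) * star E := by
  have h1 : star E * E = 1 := Matrix.UnitaryGroup.star_mul_self ⟨E, hE⟩
  calc (E * diagonal f * star E) * (E * diagonal g * star E)
      = E * (diagonal f * (star E * E) * diagonal g) * star E := by noncomm_ring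
    _ = E * diagonal (fun k => f k * g k) * star E := by
        rw [h1, mul_one, diagonal_mul_diagonal]

private lemma conjDiag_transpose (E : Matrix (Fin d) (Fin d) ℝ) (f : Fin d → ℝ) :
    (E * diagonal f * star E)ᵀ = E * diagonal f * star E := by
  have hf : star f = f := by funext k; simp
  rw [← Matrix.conjTranspose_eq_transpose_of_trivial, Matrix.conjTranspose_mul,
    Matrix.conjTranspose_mul, Matrix.diagonal_conjTranspose, hf,
    ← Matrix.star_eq_conjTranspose, ← Matrix.star_eq_conjTranspose, star_star,
    Matrix.mul_assoc]

/-- The range projection of a real symmetric matrix, packaged existentially. -/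
private lemma exists_rproj {X : Matrix (Fin d) (Fin d) ℝ} (hX : X.IsHermitian) :
    ∃ P : Matrix (Fin d) (Fin d) ℝ, Pᵀ = P ∧ P * P = P ∧ P * X = X ∧ X * P = X ∧
      ∃ W : Matrix (Fin d) (Fin d) ℝ, P = W * X ∧ P = X * W := by
  obtain ⟨E, hE, f, hrep⟩ : ∃ E, E ∈ Matrix.unitaryGroup (Fin d) ℝ ∧ ∃ f : Fin d → ℝ,
      X = E * diagonal f * star E :=
    ⟨_, hX.eigenvectorUnitary.2, _, spec_real hX⟩
  set g : Fin d → ℝ := fun k => if f k = 0 then (0:ℝ) else 1 with hg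
  have h1 : (fun k => g k * g k) = g := by
    funext k; by_cases h : f k = 0 <;> simp [hg, h]
  have h2 : (fun k => g k * f k) = f := by
    funext k; by_cases h : f k = 0 <;> simp [hg, h]
  have h3 : (fun k => f k * g k) = f := by
    funext k; by_cases h : f k = 0 <;> simp [hg, h]
  have h4 : (fun k => (f k)⁻¹ * f k) = g := by
    funext k; by_cases h : f k = 0 <;> simp [hg, h]
  have h5 : (fun k => f k * (f k)⁻¹) = g := by
    funext k; by_cases h : f k = 0 <;> simp [hg, h]
  refine ⟨E * diagonal g * star E, conjDiag_transpose _ _, ?_, ?_, ?_,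
    E * diagonal (fun k => (f k)⁻¹) * star E, ?_, ?_⟩
  · rw [conjDiag_mul hE, h1]
  · rw [hrep, conjDiag_mul hE, h2]
  · rw [hrep, conjDiag_mul hE, h3]
  · rw [hrep, conjDiag_mul hE, h4]
  · rw [hrep, conjDiag_mul hE, h5]

private lemma sum_if_eq {n : ℕ} (i : Fin n) (f : Fin n → ℝ) :
    ∑ k, (if k = i then f k else 0) = f i := by
  simp

open Fin.NatCast in
private lemma fin_shift_ne {n : ℕ} [NeZero n] (hn : 5 ≤ n) (i : Fin n) (k : ℕ) (h1 : 0 < k)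
    (h2 : k < n) : i + (k : Fin n) ≠ i := by
  intro h
  have h0 : (k : Fin n) = 0 := add_eq_left.mp h
  rw [Fin.natCast_eq_zero] at h0
  have := Nat.le_of_dvd h1 h0
  omega

end Aux

/-- If `A` is symmetric and its support graph is an `n`-cycle (`n ≥ 5`),
then `A` is completely psd iff `A` is completely positive. -/
theorem cycle_csplus_iff_cp {n : ℕ} [NeZero n] (hn : 5 ≤ n)
    (A : Matrix (Fin n) (Fin n) ℝ) (hsym : A.IsSymm)
    (hcyc : ∃ e : Fin n ≃ Fin n,
      ∀ i j, i ≠ j → (A i j ≠ 0 ↔ (e j = e i + 1 ∨ e i = e j + 1))) :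
    CompletelyPSD A ↔ CompletelyPositive A := by
  constructor
  · -- hard direction
    rintro ⟨D, X, hD, hpsd, hA⟩
    obtain ⟨e, he⟩ := hcyc
    -- Fin n arithmetic facts
    have ne1 : ∀ i : Fin n, i + 1 ≠ i := by
      intro i
      open Fin.NatCast Fin.CommRing in have c1 : ((1:ℕ) : Fin n) = (1 : Fin n) := by norm_cast
      simpa [c1] using fin_shift_ne hn i 1 (by omega) (by omega)
    have ne2 : ∀ i : Fin n, i + 1 + 1 ≠ i := by
      intro i
      open Fin.NatCast Fin.CommRing in have c2 : ((2:ℕ) : Fin n) = (1 : Fin n) + 1 := by push_cast; ring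
      rw [add_assoc, ← c2]
      exact fin_shift_ne hn i 2 (by omega) (by omega)
    have ne3 : ∀ i : Fin n, i + 1 + 1 + 1 ≠ i := by
      intro i
      open Fin.NatCast Fin.CommRing in have c3 : ((3:ℕ) : Fin n) = (1 : Fin n) + 1 + 1 := by push_cast; ring
      open Fin.NatCast Fin.CommRing in rw [add_assoc, add_assoc, show (1:Fin n) + (1 + 1) = 1 + 1 + 1 by ring, ← c3]
      exact fin_shift_ne hn i 3 (by omega) (by omega)
    -- relabeled data
    set Y : Fin n → Matrix (Fin D) (Fin D) ℝ := fun i => X (e.symm i) with hYdef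
    set B : Fin n → Fin n → ℝ := fun i j => (Y i * Y j).trace with hBdef
    have hYpsd : ∀ i, (Y i).PosSemidef := fun i => hpsd _
    have hYt : ∀ i, (Y i)ᵀ = Y i := fun i => by
      rw [← Matrix.conjTranspose_eq_transpose_of_trivial]; exact (hYpsd i).1
    have hAB : ∀ i j, A (e.symm i) (e.symm j) = B i j := fun i j => hA _ _
    have hBsym : ∀ i j, B i j = B j i := fun i j => Matrix.trace_mul_comm _ _
    have hBzero : ∀ i j, i ≠ j → ¬(j = i + 1 ∨ i = j + 1) → B i j = 0 := by
      intro i j hij hadj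
      have hne : e.symm i ≠ e.symm j := fun h => hij (e.symm.injective h)
      have hiff := he _ _ hne
      simp only [Equiv.apply_symm_apply] at hiff
      rw [← hAB]
      by_contra hne0
      exact hadj (hiff.mp hne0)
    have hOrtho : ∀ i j, i ≠ j → ¬(j = i + 1 ∨ i = j + 1) → Y i * Y j = 0 := fun i j h1 h2 =>
      mul_eq_zero_of_trace_eq_zero (hYpsd i) (hYpsd j) (hBzero i j h1 h2)
    -- projections
    have hproj := fun i => exists_rproj (hYpsd i).1
    choose P hPt hPidem hPl hPr W hW1 hW2 using hproj
    have hPzero : ∀ i j, Y i * Y j = 0 → P i * P j = 0 := by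
      intro i j h
      rw [hW1 i, hW2 j]
      calc W i * Y i * (Y j * W j) = W i * (Y i * Y j) * W j := by noncomm_ring
      _ = 0 := by rw [h]; simp
    -- nonadjacency of i-1 and i+1
    have hfar : ∀ i : Fin n, (i - 1) ≠ (i + 1) ∧
        ¬((i + 1) = (i - 1) + 1 ∨ (i - 1) = (i + 1) + 1) := by
      intro i
      have hsub : i - 1 + 1 = i := sub_add_cancel i 1
      refine ⟨?_, ?_⟩
      · intro h
        apply ne2 (i - 1)
        calc i - 1 + 1 + 1 = i + 1 := by rw [hsub]
        _ = i - 1 := h.symm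
      · rintro (h | h)
        · rw [hsub] at h; exact ne1 i h
        · apply ne3 (i - 1)
          calc i - 1 + 1 + 1 + 1 = i + 1 + 1 := by rw [hsub]
          _ = i - 1 := h.symm
    have hPfar : ∀ i : Fin n, P (i - 1) * P (i + 1) = 0 ∧ P (i + 1) * P (i - 1) = 0 := by
      intro i
      obtain ⟨hne, hadj⟩ := hfar i
      constructor
      · exact hPzero _ _ (hOrtho _ _ hne hadj)
      · refine hPzero _ _ (hOrtho _ _ (Ne.symm hne) ?_)
        rintro (h | h)
        · exact hadj (Or.inr h)
        · exact hadj (Or.inl h)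
    -- the edge quantities
    set a : Fin n → ℝ := fun i => B i (i + 1) with hadef
    set pp : Fin n → ℝ := fun i => ((Y i * P (i+1))ᵀ * (Y i * P (i+1))).trace with hppdef
    set qq : Fin n → ℝ := fun i => ((Y (i+1) * P i)ᵀ * (Y (i+1) * P i)).trace with hqqdef
    have hpp0 : ∀ i, 0 ≤ pp i := fun i => trace_tm_nonneg _
    have hqq0 : ∀ i, 0 ≤ qq i := fun i => trace_tm_nonneg _
    have ha0 : ∀ i, 0 ≤ a i := fun i => trace_psd_mul_nonneg (hYpsd i) (hYpsd (i+1))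
    have hd0 : ∀ i, 0 ≤ B i i := fun i => trace_psd_mul_nonneg (hYpsd i) (hYpsd i)
    have hF2 : ∀ i, a i = ((Y i * P (i+1)) * (Y (i+1) * P i)).trace := by
      intro i
      have h1 : (Y i * P (i+1)) * (Y (i+1) * P i) = Y i * Y (i+1) * P i := by
        calc (Y i * P (i+1)) * (Y (i+1) * P i)
            = Y i * (P (i+1) * Y (i+1)) * P i := by noncomm_ring
          _ = Y i * Y (i+1) * P i := by rw [hPl (i+1)]
      rw [h1, Matrix.trace_mul_cycle, hPl i]
    have hF3 : ∀ i, (a i)^2 ≤ pp i * qq i := by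
      intro i
      rw [hF2 i, hppdef, hqqdef]
      exact trace_mul_sq_le _ _
    have hptrace : ∀ i j, ((Y i * P j)ᵀ * (Y i * P j)).trace = ((Y i * Y i) * P j).trace := by
      intro i j
      have h₁ : (Y i * P j)ᵀ * (Y i * P j) = P j * (Y i * Y i * P j) := by
        rw [Matrix.transpose_mul, hPt, hYt]; noncomm_ring
      rw [h₁, Matrix.trace_mul_comm]
      calc ((Y i * Y i * P j) * P j).trace = ((Y i * Y i) * (P j * P j)).trace := by
            rw [show Y i * Y i * P j * P j = (Y i * Y i) * (P j * P j) by noncomm_ring]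
        _ = ((Y i * Y i) * P j).trace := by rw [hPidem j]
    have hF4 : ∀ i, pp i + qq (i - 1) ≤ B i i := by
      intro i
      have hsub : (i - 1) + 1 = i := sub_add_cancel i 1
      have hq : qq (i - 1) = ((Y i * Y i) * P (i - 1)).trace := by
        rw [hqqdef]; simp only [hsub]; exact hptrace i (i - 1)
      have hp : pp i = ((Y i * Y i) * P (i + 1)).trace := hptrace i (i + 1)
      have hYY : (Y i * Y i).PosSemidef := by
        have hYY' : Y i * Y i = (Y i)ᴴ * Y i := by
          rw [Matrix.conjTranspose_eq_transpose_of_trivial, hYt]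
        rw [hYY']
        exact Matrix.posSemidef_conjTranspose_mul_self _
      set R : Matrix (Fin D) (Fin D) ℝ := 1 - P (i - 1) - P (i + 1) with hRdef
      have hRt : Rᵀ = R := by
        rw [hRdef, Matrix.transpose_sub, Matrix.transpose_sub, Matrix.transpose_one,
          hPt, hPt]
      have hRR : R * R = R := by
        rw [hRdef]
        have e1 := (hPfar i).1
        have e2 := (hPfar i).2
        have i1 := hPidem (i - 1)
        have i2 := hPidem (i + 1)
        calc (1 - P (i-1) - P (i+1)) * (1 - P (i-1) - P (i+1))
            = 1 - P (i-1) - P (i+1) - P (i-1) + P (i-1) * P (i-1) + P (i-1) * P (i+1)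
              - P (i+1) + P (i+1) * P (i-1) + P (i+1) * P (i+1) := by noncomm_ring
          _ = 1 - P (i-1) - P (i+1) := by rw [e1, e2, i1, i2]; noncomm_ring
      have hRpsd : R.PosSemidef := by
        have : R = Rᴴ * R := by
          rw [Matrix.conjTranspose_eq_transpose_of_trivial, hRt, hRR]
        rw [this]
        exact Matrix.posSemidef_conjTranspose_mul_self _
      have htr : 0 ≤ ((Y i * Y i) * R).trace := trace_psd_mul_nonneg hYY hRpsd
      have hexp : ((Y i * Y i) * R).trace
          = B i i - ((Y i * Y i) * P (i-1)).trace - ((Y i * Y i) * P (i+1)).trace := by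
        rw [hRdef, Matrix.mul_sub, Matrix.mul_sub, Matrix.mul_one, Matrix.trace_sub,
          Matrix.trace_sub]
      rw [hexp] at htr
      rw [hp, hq]
      linarith
    -- scalar construction
    set s : Fin n → ℝ := fun i => Real.sqrt (pp i) with hsdef
    set t : Fin n → ℝ := fun i => a i / Real.sqrt (pp i) with htdef
    have hs0 : ∀ i, 0 ≤ s i := fun i => Real.sqrt_nonneg _
    have ht0 : ∀ i, 0 ≤ t i := fun i => div_nonneg (ha0 i) (Real.sqrt_nonneg _)
    have hs2 : ∀ i, (s i)^2 = pp i := fun i => Real.sq_sqrt (hpp0 i)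
    have hst : ∀ i, s i * t i = a i := by
      intro i
      by_cases hp : pp i = 0
      · have ha : a i = 0 := by
          have := hF3 i
          rw [hp, zero_mul] at this
          have h2 := sq_nonneg (a i)
          nlinarith [ha0 i]
        rw [htdef, hsdef]
        simp [hp, ha]
      · have hpos : 0 < pp i := lt_of_le_of_ne (hpp0 i) (Ne.symm hp)
        have hs : Real.sqrt (pp i) ≠ 0 := by positivity
        rw [htdef, hsdef]
        field_simp
    have ht2 : ∀ i, (t i)^2 ≤ qq i := by
      intro i
      by_cases hp : pp i = 0
      · have : t i = 0 := by rw [htdef]; simp [hp]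
        rw [this]
        simpa using hqq0 i
      · have hpos : 0 < pp i := lt_of_le_of_ne (hpp0 i) (Ne.symm hp)
        have : (t i)^2 = (a i)^2 / pp i := by
          rw [htdef, div_pow, Real.sq_sqrt (hpp0 i)]
        rw [this, div_le_iff₀ hpos]
        calc (a i)^2 ≤ pp i * qq i := hF3 i
        _ = qq i * pp i := by ring
    have hsum : ∀ i, (s i)^2 + (t (i-1))^2 ≤ B i i := by
      intro i
      have := hF4 i
      have h2 := ht2 (i - 1)
      rw [hs2 i]
      linarith
    set r : Fin n → ℝ := fun i => Real.sqrt (B i i - (s i)^2 - (t (i-1))^2) with hrdef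
    have hr0 : ∀ i, 0 ≤ r i := fun i => Real.sqrt_nonneg _
    have hr2 : ∀ i, (r i)^2 = B i i - (s i)^2 - (t (i-1))^2 := by
      intro i
      rw [hrdef]
      refine Real.sq_sqrt ?_
      have := hsum i
      linarith
    -- the nonnegative vectors
    set v : Fin n → Fin n → ℝ := fun i k => if k = i then r i else 0 with hvdef
    set w : Fin n → Fin n → ℝ := fun i k =>
      (if k = i then s i else 0) + (if i = k + 1 then t k else 0) with hwdef
    set x : Fin n → Fin (n + n) → ℝ := fun i => Fin.append (v i) (w i) with hxdef
    have hx0 : ∀ i k, 0 ≤ x i k := by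
      intro i k
      show 0 ≤ Fin.append (v i) (w i) k
      refine Fin.addCases (fun k0 => ?_) (fun k0 => ?_) k
      · rw [Fin.append_left]
        show (0:ℝ) ≤ if k0 = i then r i else 0
        split
        · exact hr0 i
        · exact le_rfl
      · rw [Fin.append_right]
        show (0:ℝ) ≤ (if k0 = i then s i else 0) + (if i = k0 + 1 then t k0 else 0)
        have h1 : (0:ℝ) ≤ (if k0 = i then s i else 0) := by
          split
          · exact hs0 i
          · exact le_rfl
        have h2 : (0:ℝ) ≤ (if i = k0 + 1 then t k0 else 0) := by
          split
          · exact ht0 k0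
          · exact le_rfl
        linarith
    -- the Gram identity
    have hGram : ∀ i j, B i j = ∑ k, x i k * x j k := by
      intro i j
      have hsplit : ∑ k, x i k * x j k
          = (∑ k, v i k * v j k) + (∑ k, w i k * w j k) := by
        rw [hxdef]
        dsimp only
        rw [Fin.sum_univ_add]
        congr 1
        · exact Finset.sum_congr rfl fun k _ => by rw [Fin.append_left, Fin.append_left]
        · exact Finset.sum_congr rfl fun k _ => by rw [Fin.append_right, Fin.append_right]
      have hvsum : ∑ k, v i k * v j k = if i = j then r i * r i else 0 := by
        have hterm : ∀ k, v i k * v j k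
            = if k = i then (if i = j then r i * r i else 0) else 0 := by
          intro k
          rw [hvdef]
          dsimp only
          by_cases h1 : k = i
          · subst h1
            by_cases h2 : k = j
            · subst h2; simp
            · simp [h2, fun h => h2 h]
          · simp [h1]
        rw [Finset.sum_congr rfl fun k _ => hterm k, sum_if_eq]
      have hACterm : ∀ k, (if k = i then s i else 0) * (if k = j then s j else 0)
          = if k = i then (if i = j then s i * s i else 0) else 0 := by
        intro k
        by_cases h1 : k = i
        · rw [if_pos h1, if_pos h1]
          by_cases h2 : i = j
          · rw [if_pos (h1.trans h2), if_pos h2, h2]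
          · have hkj : ¬ k = j := fun hh => h2 (by rw [← h1, hh])
            rw [if_neg hkj, if_neg h2, mul_zero]
        · rw [if_neg h1, if_neg h1, zero_mul]
      have hADterm : ∀ k, (if k = i then s i else 0) * (if j = k + 1 then t k else 0)
          = if k = i then (if j = i + 1 then s i * t i else 0) else 0 := by
        intro k
        by_cases h1 : k = i
        · rw [if_pos h1, if_pos h1]
          by_cases h2 : j = k + 1
          · have h2' : j = i + 1 := by rw [← h1]; exact h2
            rw [if_pos h2, if_pos h2', h1]
          · have h2' : ¬ j = i + 1 := fun hh => h2 (by rw [h1]; exact hh)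
            rw [if_neg h2, if_neg h2', mul_zero]
        · rw [if_neg h1, if_neg h1, zero_mul]
      have hBCterm : ∀ k, (if i = k + 1 then t k else 0) * (if k = j then s j else 0)
          = if k = j then (if i = j + 1 then t j * s j else 0) else 0 := by
        intro k
        by_cases h1 : k = j
        · rw [if_pos h1, if_pos h1]
          by_cases h2 : i = k + 1
          · have h2' : i = j + 1 := by rw [← h1]; exact h2
            rw [if_pos h2, if_pos h2', h1]
          · have h2' : ¬ i = j + 1 := fun hh => h2 (by rw [h1]; exact hh)
            rw [if_neg h2, if_neg h2', zero_mul]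
        · rw [if_neg h1, if_neg h1, mul_zero]
      have hBDterm : ∀ k, (if i = k + 1 then t k else 0) * (if j = k + 1 then t k else 0)
          = if k = i - 1 then (if i = j then t (i-1) * t (i-1) else 0) else 0 := by
        intro k
        by_cases h1 : i = k + 1
        · have hk : k = i - 1 := by rw [h1, add_sub_cancel_right]
          rw [if_pos h1, if_pos hk]
          by_cases h2 : j = k + 1
          · have hij : i = j := by rw [h1, h2]
            rw [if_pos h2, if_pos hij, ← hk]
          · have hij : ¬ i = j := fun hh => h2 (by rw [← hh]; exact h1)
            rw [if_neg h2, if_neg hij, mul_zero]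
        · have hk : ¬ k = i - 1 := fun hh => h1 (by rw [hh, sub_add_cancel])
          rw [if_neg h1, if_neg hk, zero_mul]
      have hwsum : ∑ k, w i k * w j k
          = (if i = j then s i * s i else 0) + (if j = i + 1 then s i * t i else 0)
            + (if i = j + 1 then t j * s j else 0)
            + (if i = j then t (i-1) * t (i-1) else 0) := by
        have hexp : ∀ k, w i k * w j k
            = (if k = i then s i else 0) * (if k = j then s j else 0)
              + (if k = i then s i else 0) * (if j = k + 1 then t k else 0)
              + ((if i = k + 1 then t k else 0) * (if k = j then s j else 0)
              + (if i = k + 1 then t k else 0) * (if j = k + 1 then t k else 0)) := by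
          intro k
          show ((if k = i then s i else 0) + (if i = k + 1 then t k else 0))
              * ((if k = j then s j else 0) + (if j = k + 1 then t k else 0)) = _
          ring
        calc ∑ k, w i k * w j k
            = ∑ k, ((if k = i then s i else 0) * (if k = j then s j else 0)
              + (if k = i then s i else 0) * (if j = k + 1 then t k else 0)
              + ((if i = k + 1 then t k else 0) * (if k = j then s j else 0)
              + (if i = k + 1 then t k else 0) * (if j = k + 1 then t k else 0))) :=
            Finset.sum_congr rfl fun k _ => hexp k
          _ = (∑ k, (if k = i then s i else 0) * (if k = j then s j else 0))
              + (∑ k, (if k = i then s i else 0) * (if j = k + 1 then t k else 0))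
              + ((∑ k, (if i = k + 1 then t k else 0) * (if k = j then s j else 0))
              + (∑ k, (if i = k + 1 then t k else 0) * (if j = k + 1 then t k else 0))) := by
            rw [Finset.sum_add_distrib, Finset.sum_add_distrib, Finset.sum_add_distrib]
          _ = (if i = j then s i * s i else 0) + (if j = i + 1 then s i * t i else 0)
              + (if i = j + 1 then t j * s j else 0)
              + (if i = j then t (i-1) * t (i-1) else 0) := by
            rw [Finset.sum_congr rfl fun k _ => hACterm k, sum_if_eq,
              Finset.sum_congr rfl fun k _ => hADterm k, sum_if_eq,
              Finset.sum_congr rfl fun k _ => hBCterm k, sum_if_eq,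
              Finset.sum_congr rfl fun k _ => hBDterm k, sum_if_eq]
            ring
      rw [hsplit, hvsum, hwsum]
      by_cases hij : i = j
      · subst hij
        have hc1 : ¬(i = i + 1) := fun h => ne1 i h.symm
        have hc2 : ¬(i = i + 1) := hc1
        simp only [if_neg hc1, if_pos trivial, eq_self_iff_true, if_true]
        nlinarith [hr2 i]
      · by_cases hj : j = i + 1
        · have hi : ¬(i = j + 1) := by
            intro h
            apply ne2 i
            rw [← hj, ← h]
          simp only [if_neg hij, if_pos hj, if_neg hi]
          rw [hj]
          have h1 := hst i
          have h2 : a i = B i (i + 1) := rfl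
          linarith
        · by_cases hi : i = j + 1
          · simp only [if_neg hij, if_neg hj, if_pos hi]
            have h1 := hst j
            have h2 : a j = B j (j + 1) := rfl
            have h3 : B i j = B j (j + 1) := by rw [hBsym i j, hi]
            linarith
          · simp only [if_neg hij, if_neg hj, if_neg hi]
            have := hBzero i j hij (by rintro (h | h) <;> [exact hj h; exact hi h])
            linarith
    -- conclude
    refine ⟨n + n, fun i => x (e i), by omega, fun i k => hx0 _ _, ?_⟩
    intro i j
    have h1 : A i j = B (e i) (e j) := by
      have := hAB (e i) (e j)
      simpa using this
    rw [h1, hGram]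
  · -- easy direction
    rintro ⟨d, x, hd, hx, hsum⟩
    refine ⟨d, fun i => diagonal (x i), hd, fun i => posSemidef_diagonal_iff.mpr (hx i), ?_⟩
    intro i j
    rw [diagonal_mul_diagonal, trace_diagonal]
    exact hsum i j
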